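/- arXiv:1907.04175 — 2 statements merged into one kernel-verified Lean document; each statement's English description precedes it below -/
import Mathlib

section
/- Let A be a nonnegative n×n matrix with all row sums positive, and let D_r be the diagonal matrix of row sums r_i(A). Then min_i r_i(D_r⁻¹ A D_r) ≥ min_i r_i(A) and max_i r_i(D_r⁻¹ A D_r) ≤ max_i r_i(A), and min_i r_i(D_r⁻¹ A D_r) ≤ ρ(A) ≤ max_i r_i(D_r⁻¹ A D_r). -/
open Matrix NNReal ENNReal
set_option maxHeartbeats 1000000

attribute [local instance] Matrix.linftyOpNormedRing Matrix.linftyOpNormedAlgebra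

noncomputable instance {n : ℕ} : CompleteSpace (Matrix (Fin n) (Fin n) ℂ) :=
  FiniteDimensional.complete ℂ _

lemma aux_row_le_norm {n : ℕ} (C : Matrix (Fin n) (Fin n) ℝ) (i : Fin n) :
    ∑ j, ‖C i j‖ ≤ ‖C.map Complex.ofReal‖ := by
  rw [Matrix.linfty_opNorm_def]
  have h := Finset.le_sup (f := fun i => ∑ j, ‖(C.map Complex.ofReal) i j‖₊)
    (Finset.mem_univ i)
  calc ∑ j, ‖C i j‖ = ((∑ j, ‖(C.map Complex.ofReal) i j‖₊ : ℝ≥0) : ℝ) := by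
        push_cast; simp [Matrix.map_apply, Complex.norm_real]
    _ ≤ _ := NNReal.coe_le_coe.mpr h

lemma aux_norm_le {n : ℕ} (C : Matrix (Fin n) (Fin n) ℝ) {M : ℝ} (hM : 0 ≤ M)
    (h : ∀ i, ∑ j, ‖C i j‖ ≤ M) : ‖C.map Complex.ofReal‖ ≤ M := by
  rw [Matrix.linfty_opNorm_def, ← Real.coe_toNNReal M hM, NNReal.coe_le_coe]
  refine Finset.sup_le fun i _ => ?_
  rw [← NNReal.coe_le_coe, Real.coe_toNNReal M hM]
  calc ((∑ j, ‖(C.map Complex.ofReal) i j‖₊ : ℝ≥0) : ℝ) = ∑ j, ‖C i j‖ := by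
        push_cast; simp [Matrix.map_apply, Complex.norm_real]
    _ ≤ M := h i

lemma aux_pow_rowsum {n : ℕ} (C : Matrix (Fin n) (Fin n) ℝ) (hC : ∀ i j, 0 ≤ C i j)
    {m : ℝ} (hm : 0 ≤ m) (h : ∀ i, m ≤ ∑ j, C i j) (k : ℕ) :
    (∀ i j, 0 ≤ (C ^ k) i j) ∧ ∀ i, m ^ k ≤ ∑ j, (C ^ k) i j := by
  induction k with
  | zero => simp [Matrix.one_apply]; intro i j; positivity
  | succ k ih =>
    rw [pow_succ']
    constructor
    · intro i j
      rw [Matrix.mul_apply]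
      exact Finset.sum_nonneg fun l _ => mul_nonneg (hC i l) (ih.1 l j)
    · intro i
      have : ∑ j, (C * C ^ k) i j = ∑ l, C i l * ∑ j, (C ^ k) l j := by
        simp_rw [Matrix.mul_apply, Finset.mul_sum]
        rw [Finset.sum_comm]
      rw [this, pow_succ]
      calc m ^ k * m ≤ (∑ l, C i l) * m ^ k := by
            rw [mul_comm]
            exact mul_le_mul_of_nonneg_right (h i) (pow_nonneg hm k)
        _ = ∑ l, C i l * m ^ k := by rw [Finset.sum_mul]
        _ ≤ ∑ l, C i l * ∑ j, (C ^ k) l j :=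
            Finset.sum_le_sum fun l _ => mul_le_mul_of_nonneg_left (ih.2 l) (hC i l)



/-- The spectral radius of a real matrix. -/
noncomputable def specRad {n : ℕ} (A : Matrix (Fin n) (Fin n) ℝ) : ℝ :=
  sSup {r : ℝ | ∃ μ ∈ spectrum ℂ (A.map (Complex.ofReal)), r = ‖μ‖}

/-- Minc's improvement of the Frobenius row-sum bounds: conjugating `A` by the
diagonal matrix of its row sums sharpens the row-sum bounds on the spectral radius. -/
theorem minc_row_sum_bounds {n : ℕ} (hn : 0 < n)
    (A : Matrix (Fin n) (Fin n) ℝ) (hA : ∀ i j, 0 ≤ A i j)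
    (r : Fin n → ℝ) (hr : ∀ i, r i = ∑ j, A i j) (hrpos : ∀ i, 0 < r i) :
    let B := (Matrix.diagonal r)⁻¹ * A * Matrix.diagonal r
    let ne : (Finset.univ : Finset (Fin n)).Nonempty := Finset.univ_nonempty_iff.mpr ⟨⟨0, hn⟩⟩
    Finset.univ.inf' ne (fun i => ∑ j, A i j) ≤ Finset.univ.inf' ne (fun i => ∑ j, B i j) ∧
    Finset.univ.sup' ne (fun i => ∑ j, B i j) ≤ Finset.univ.sup' ne (fun i => ∑ j, A i j) ∧
    Finset.univ.inf' ne (fun i => ∑ j, B i j) ≤ specRad A ∧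
    specRad A ≤ Finset.univ.sup' ne (fun i => ∑ j, B i j) := by
  intro B ne
  have hrne : ∀ i, r i ≠ 0 := fun i => (hrpos i).ne'
  have hDinv : (Matrix.diagonal r)⁻¹ = Matrix.diagonal fun i => (r i)⁻¹ := by
    refine Matrix.inv_eq_right_inv ?_
    rw [Matrix.diagonal_mul_diagonal]
    have : (fun i => r i * (r i)⁻¹) = fun _ => (1 : ℝ) := by
      funext i; exact mul_inv_cancel₀ (hrne i)
    rw [this, Matrix.diagonal_one]
  have hB : ∀ i j, B i j = (r i)⁻¹ * A i j * r j := by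
    intro i j
    show ((Matrix.diagonal r)⁻¹ * A * Matrix.diagonal r) i j = _
    rw [hDinv, Matrix.mul_diagonal, Matrix.diagonal_mul]
  have hBnn : ∀ i j, 0 ≤ B i j := fun i j => by
    rw [hB]
    exact mul_nonneg (mul_nonneg (inv_nonneg.mpr (hrpos i).le) (hA i j)) (hrpos j).le
  have hSB : ∀ i, ∑ j, B i j = (r i)⁻¹ * ∑ j, A i j * r j := by
    intro i
    rw [Finset.mul_sum]
    exact Finset.sum_congr rfl fun j _ => by rw [hB, mul_assoc]
  -- part 1
  have part1 : ∀ i, Finset.univ.inf' ne (fun i => ∑ j, A i j) ≤ ∑ j, B i j := by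
    intro i
    set m₁ := Finset.univ.inf' ne (fun i => ∑ j, A i j) with hm₁
    have h1 : ∀ j, m₁ ≤ r j := fun j =>
      (hr j) ▸ Finset.inf'_le _ (Finset.mem_univ j)
    have h2 : r i * m₁ ≤ ∑ j, A i j * r j := by
      rw [hr i, Finset.sum_mul]
      exact Finset.sum_le_sum fun j _ => mul_le_mul_of_nonneg_left (h1 j) (hA i j)
    rw [hSB i]
    calc m₁ = (r i)⁻¹ * (r i * m₁) := by rw [inv_mul_cancel_left₀ (hrne i)]
      _ ≤ (r i)⁻¹ * ∑ j, A i j * r j :=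
          mul_le_mul_of_nonneg_left h2 (inv_nonneg.mpr (hrpos i).le)
  have part2 : ∀ i, ∑ j, B i j ≤ Finset.univ.sup' ne (fun i => ∑ j, A i j) := by
    intro i
    set M₁ := Finset.univ.sup' ne (fun i => ∑ j, A i j) with hM₁
    have h1 : ∀ j, r j ≤ M₁ := fun j => by
      rw [hr j, hM₁]; exact Finset.le_sup' (fun i => ∑ j, A i j) (Finset.mem_univ j)
    have h2 : ∑ j, A i j * r j ≤ r i * M₁ := by
      rw [hr i, Finset.sum_mul]
      exact Finset.sum_le_sum fun j _ => mul_le_mul_of_nonneg_left (h1 j) (hA i j)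
    rw [hSB i]
    calc (r i)⁻¹ * ∑ j, A i j * r j ≤ (r i)⁻¹ * (r i * M₁) :=
          mul_le_mul_of_nonneg_left h2 (inv_nonneg.mpr (hrpos i).le)
      _ = M₁ := by rw [inv_mul_cancel_left₀ (hrne i)]
  -- spectral setup
  haveI : Nonempty (Fin n) := ⟨⟨0, hn⟩⟩
  set Bc : Matrix (Fin n) (Fin n) ℂ := B.map Complex.ofReal with hBcdef
  set m := Finset.univ.inf' ne (fun i => ∑ j, B i j) with hmdef
  set M := Finset.univ.sup' ne (fun i => ∑ j, B i j) with hMdef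
  have hm0 : 0 ≤ m :=
    Finset.le_inf' ne (fun i => ∑ j, B i j) fun i _ =>
      Finset.sum_nonneg fun j _ => hBnn i j
  have hM0 : 0 ≤ M := by
    have h1 : ∑ j, B (⟨0, hn⟩ : Fin n) j ≤ M :=
      Finset.le_sup' (fun i => ∑ j, B i j) (Finset.mem_univ _)
    have h2 : (0 : ℝ) ≤ ∑ j, B (⟨0, hn⟩ : Fin n) j :=
      Finset.sum_nonneg fun j _ => hBnn _ j
    exact le_trans h2 h1
  have hu1 : (Matrix.diagonal fun i => (r i : ℂ)) *
      (Matrix.diagonal fun i => ((r i : ℂ))⁻¹) = 1 := by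
    rw [Matrix.diagonal_mul_diagonal]
    have : (fun i => (r i : ℂ) * ((r i : ℂ))⁻¹) = fun _ => (1 : ℂ) := by
      funext i
      exact mul_inv_cancel₀ (by exact_mod_cast hrne i)
    rw [this, Matrix.diagonal_one]
  have hu2 : (Matrix.diagonal fun i => ((r i : ℂ))⁻¹) *
      (Matrix.diagonal fun i => (r i : ℂ)) = 1 := by
    rw [Matrix.diagonal_mul_diagonal]
    have : (fun i => ((r i : ℂ))⁻¹ * (r i : ℂ)) = fun _ => (1 : ℂ) := by
      funext i
      exact inv_mul_cancel₀ (by exact_mod_cast hrne i)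
    rw [this, Matrix.diagonal_one]
  set u : (Matrix (Fin n) (Fin n) ℂ)ˣ :=
    ⟨Matrix.diagonal fun i => (r i : ℂ), Matrix.diagonal fun i => ((r i : ℂ))⁻¹, hu1, hu2⟩
    with hudef
  have hspec : spectrum ℂ (A.map Complex.ofReal) = spectrum ℂ Bc := by
    have hconj : Bc = (↑(u⁻¹) : Matrix (Fin n) (Fin n) ℂ) * (A.map Complex.ofReal) * (↑u : Matrix (Fin n) (Fin n) ℂ) := by
      show Bc = (Matrix.diagonal fun i => ((r i : ℂ))⁻¹) *
        (A.map Complex.ofReal) * (Matrix.diagonal fun i => (r i : ℂ))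
      ext i j
      rw [Matrix.mul_diagonal, Matrix.diagonal_mul, hBcdef, Matrix.map_apply, hB]
      simp only [Matrix.map_apply]
      push_cast
      ring
    rw [hconj, spectrum.units_conjugate']
  have hrowB : ∀ i, ∑ j, ‖B i j‖ = ∑ j, B i j := fun i =>
    Finset.sum_congr rfl fun j _ => by
      rw [Real.norm_eq_abs, abs_of_nonneg (hBnn i j)]
  -- upper bound
  have hub : specRad A ≤ M := by
    refine Real.sSup_le ?_ hM0
    rintro x ⟨μ, hμ, rfl⟩
    rw [hspec] at hμ
    have h1 : ‖μ‖ ≤ ‖Bc‖ := spectrum.norm_le_norm_of_mem hμ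
    have h2 : ‖Bc‖ ≤ M := by
      refine aux_norm_le B hM0 fun i => ?_
      rw [hrowB i]
      exact Finset.le_sup' (fun i => ∑ j, B i j) (Finset.mem_univ i)
    calc ‖μ‖ = ‖μ‖ := rfl
      _ ≤ ‖Bc‖ := h1
      _ ≤ M := h2
  -- lower bound
  have hpow := aux_pow_rowsum B hBnn hm0
    (fun i => Finset.inf'_le (fun i => ∑ j, B i j) (Finset.mem_univ i))
  have hk : ∀ k : ℕ, m ^ k ≤ ‖Bc ^ k‖ := by
    intro k
    have h1 : Bc ^ k = (B ^ k).map Complex.ofReal := by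
      have := (map_pow (Complex.ofRealHom.mapMatrix) B k).symm
      simp only [RingHom.mapMatrix_apply] at this; exact this
    rw [h1]
    calc m ^ k ≤ ∑ j, (B ^ k) (⟨0, hn⟩ : Fin n) j := (hpow k).2 _
      _ = ∑ j, ‖(B ^ k) (⟨0, hn⟩ : Fin n) j‖ :=
          (Finset.sum_congr rfl fun j _ => by
            rw [Real.norm_eq_abs, abs_of_nonneg ((hpow k).1 _ j)]).symm
      _ ≤ ‖(B ^ k).map Complex.ofReal‖ := aux_row_le_norm _ _
  have hsr : ENNReal.ofReal m ≤ spectralRadius ℂ Bc := by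
    refine ge_of_tendsto (spectrum.pow_nnnorm_pow_one_div_tendsto_nhds_spectralRadius Bc) ?_
    filter_upwards [Filter.eventually_ge_atTop 1] with k hk1
    have hkne : (k : ℝ) ≠ 0 := Nat.cast_ne_zero.mpr (by omega)
    have h2 : ENNReal.ofReal (m ^ k) ≤ (‖Bc ^ k‖₊ : ℝ≥0∞) := by
      rw [← enorm_eq_nnnorm, ← ofReal_norm]
      exact ENNReal.ofReal_le_ofReal (hk k)
    calc ENNReal.ofReal m = (ENNReal.ofReal m ^ k) ^ (1 / (k : ℝ)) := by
          rw [← ENNReal.rpow_natCast, ← ENNReal.rpow_mul, mul_one_div,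
            div_self hkne, ENNReal.rpow_one]
      _ ≤ ((‖Bc ^ k‖₊ : ℝ≥0∞)) ^ (1 / (k : ℝ)) := by
          refine ENNReal.rpow_le_rpow ?_ (by positivity)
          rw [← ENNReal.ofReal_pow hm0]
          exact h2
  haveI : Nontrivial (Matrix (Fin n) (Fin n) ℂ) := by infer_instance
  obtain ⟨z, hz, hznorm⟩ := spectrum.exists_nnnorm_eq_spectralRadius (a := Bc)
  have hmz : m ≤ ‖z‖ := by
    rw [hznorm.symm, ← enorm_eq_nnnorm, ← ofReal_norm] at hsr
    exact (ENNReal.ofReal_le_ofReal_iff (norm_nonneg z)).mp hsr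
  have hbdd : BddAbove {x : ℝ | ∃ μ ∈ spectrum ℂ (A.map Complex.ofReal), x = ‖μ‖} := by
    have heq : {x : ℝ | ∃ μ ∈ spectrum ℂ (A.map Complex.ofReal), x = ‖μ‖} =
        (fun μ : ℂ => ‖μ‖) '' spectrum ℂ (A.map Complex.ofReal) := by
      ext x
      simp [Set.mem_image, eq_comm]
    rw [heq]
    exact (((A.map Complex.ofReal).finite_spectrum).image _).bddAbove
  have hlb : m ≤ specRad A := by
    have hmem : ‖z‖ ∈
        {x : ℝ | ∃ μ ∈ spectrum ℂ (A.map Complex.ofReal), x = ‖μ‖} :=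
      ⟨z, hspec ▸ hz, rfl⟩
    exact le_trans (hmz.trans_eq rfl) (le_csSup hbdd hmem)
  exact ⟨Finset.le_inf' ne (fun i => ∑ j, B i j) fun i _ => part1 i,
    Finset.sup'_le ne (fun i => ∑ j, B i j) fun i _ => part2 i, hlb, hub⟩
end

section
/- Let A be an n×n primitive matrix with all row sums positive. Define the sequence A^(0) = A and A^(t) = D_{r^(t-1)}⁻¹ A^(t-1) D_{r^(t-1)}, where r^(t-1) is the vector of row sums of A^(t-1). Then the sequences ξ^(t) = ρ(A) − min_i r_i(A^(t)) and ζ^(t) = max_i r_i(A^(t)) − ρ(A) are nonnegative and nonincreasing, and both converge to 0 as t → ∞; in particular every row sum of A^(t) converges to the Perron root ρ(A). -/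
open Matrix Filter

section Spec
variable {n : ℕ}

attribute [local instance] Matrix.linftyOpNormedRing Matrix.linftyOpNormedAlgebra

lemma eig_vec {C : Matrix (Fin n) (Fin n) ℂ} {μ : ℂ} (h : μ ∈ spectrum ℂ C) :
    ∃ v : Fin n → ℂ, v ≠ 0 ∧ C.mulVec v = μ • v := by
  rw [spectrum.mem_iff] at h
  have hdet : (μ • (1 : Matrix (Fin n) (Fin n) ℂ) - C).det = 0 := by
    by_contra hd
    exact h (by
      have := (Matrix.isUnit_iff_isUnit_det _).mpr (isUnit_iff_ne_zero.mpr hd)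
      simpa [Algebra.algebraMap_eq_smul_one] using this)
  obtain ⟨v, hv0, hv⟩ := (Matrix.exists_mulVec_eq_zero_iff).mpr hdet
  refine ⟨v, hv0, ?_⟩
  have := hv
  rw [Matrix.sub_mulVec, sub_eq_zero] at this
  simpa [Matrix.smul_mulVec, Matrix.one_mulVec] using this.symm

lemma eig_abs_le_rowsum {C : Matrix (Fin n) (Fin n) ℝ} (hC : ∀ i j, 0 ≤ C i j)
    {μ : ℂ} (h : μ ∈ spectrum ℂ (C.map Complex.ofReal)) {s : ℝ}
    (hs : ∀ i, ∑ j, C i j ≤ s) : ‖μ‖ ≤ s := by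
  obtain ⟨v, hv0, hv⟩ := eig_vec h
  obtain ⟨j0, hj0⟩ := Function.ne_iff.mp hv0
  obtain ⟨i, -, hi⟩ := Finset.exists_max_image Finset.univ (fun j => ‖v j‖)
    ⟨j0, Finset.mem_univ j0⟩
  have hi' : ∀ j, ‖v j‖ ≤ ‖v i‖ := fun j => hi j (Finset.mem_univ j)
  have hvi : 0 < ‖v i‖ := by
    have := hi' j0
    have h0 : 0 < ‖v j0‖ := by
      simpa [norm_pos_iff] using (by simpa using hj0 : v j0 ≠ 0)
    linarith
  have key : ‖μ‖ * ‖v i‖ ≤ s * ‖v i‖ := by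
    have hmv : (C.map Complex.ofReal).mulVec v i = μ * v i := by
      have := congrFun hv i
      simpa using this
    calc ‖μ‖ * ‖v i‖ = ‖∑ j, (C i j : ℂ) * v j‖ := by
          rw [← norm_mul, ← hmv]; simp [Matrix.mulVec, dotProduct, Matrix.map_apply]
      _ ≤ ∑ j, ‖(C i j : ℂ) * v j‖ := by
          exact (norm_sum_le _ _)
      _ = ∑ j, C i j * ‖v j‖ := by
          refine Finset.sum_congr rfl fun j _ => ?_
          rw [norm_mul, Complex.norm_real, Real.norm_eq_abs, abs_of_nonneg (hC i j)]
      _ ≤ ∑ j, C i j * ‖v i‖ :=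
          Finset.sum_le_sum fun j _ => mul_le_mul_of_nonneg_left (hi' j) (hC i j)
      _ = (∑ j, C i j) * ‖v i‖ := by rw [Finset.sum_mul]
      _ ≤ s * ‖v i‖ := mul_le_mul_of_nonneg_right (hs i) hvi.le
  exact le_of_mul_le_mul_right (by linarith) hvi


lemma specSet_finite (A : Matrix (Fin n) (Fin n) ℝ) :
    {r : ℝ | ∃ μ ∈ spectrum ℂ (A.map (Complex.ofReal)), r = ‖μ‖}.Finite := by
  have : {r : ℝ | ∃ μ ∈ spectrum ℂ (A.map (Complex.ofReal)), r = ‖μ‖}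
      = (fun μ => ‖μ‖) '' spectrum ℂ (A.map (Complex.ofReal)) := by
    ext x; simp [eq_comm, Set.mem_image]
  rw [this]
  exact (Matrix.finite_spectrum _).image _

lemma specSet_nonempty (hn : 0 < n) (A : Matrix (Fin n) (Fin n) ℝ) :
    {r : ℝ | ∃ μ ∈ spectrum ℂ (A.map (Complex.ofReal)), r = ‖μ‖}.Nonempty := by
  have : NeZero n := ⟨hn.ne'⟩
  obtain ⟨μ, hμ⟩ := spectrum.nonempty (A.map (Complex.ofReal))
  exact ⟨‖μ‖, μ, hμ, rfl⟩

lemma abs_le_specRad (hn : 0 < n) {A : Matrix (Fin n) (Fin n) ℝ} {μ : ℂ}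
    (hμ : μ ∈ spectrum ℂ (A.map (Complex.ofReal))) : ‖μ‖ ≤ specRad A :=
  le_csSup (specSet_finite A).bddAbove ⟨μ, hμ, rfl⟩

lemma specRad_nonneg (hn : 0 < n) (A : Matrix (Fin n) (Fin n) ℝ) : 0 ≤ specRad A := by
  obtain ⟨x, μ, hμ, rfl⟩ := specSet_nonempty hn A
  exact (norm_nonneg μ).trans (abs_le_specRad hn hμ)

lemma rowsum_le_specRad (hn : 0 < n) {C : Matrix (Fin n) (Fin n) ℝ}
    (hC : ∀ i j, 0 ≤ C i j) {s : ℝ} (hs : 0 ≤ s) (h : ∀ i, s ≤ ∑ j, C i j) :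
    s ≤ specRad C := by
  have : NeZero n := ⟨hn.ne'⟩
  set a : Matrix (Fin n) (Fin n) ℂ := C.map Complex.ofReal with ha
  -- entries of powers are nonneg
  have hCk : ∀ k i j, 0 ≤ (C ^ k) i j := by
    intro k
    induction k with
    | zero => intro i j; by_cases hij : i = j <;> simp [pow_zero, Matrix.one_apply, hij]
    | succ k ih =>
        intro i j
        rw [pow_succ, Matrix.mul_apply]
        exact Finset.sum_nonneg fun l _ => mul_nonneg (ih i l) (hC l j)
  have hpow : ∀ k i, s ^ k ≤ ∑ j, (C ^ k) i j := by
    intro k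
    induction k with
    | zero => intro i; simp [pow_zero, Matrix.one_apply]
    | succ k ih =>
        intro i
        have : ∑ j, (C ^ (k+1)) i j = ∑ l, C i l * ∑ j, (C ^ k) l j := by
          simp_rw [pow_succ', Matrix.mul_apply, Finset.mul_sum]
          rw [Finset.sum_comm]
        rw [this, pow_succ']
        calc s * s ^ k ≤ (∑ l, C i l) * s ^ k :=
              mul_le_mul_of_nonneg_right (h i) (pow_nonneg hs k)
          _ = ∑ l, C i l * s ^ k := by rw [Finset.sum_mul]
          _ ≤ ∑ l, C i l * ∑ j, (C ^ k) l j :=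
              Finset.sum_le_sum fun l _ => mul_le_mul_of_nonneg_left (ih l) (hC i l)
  have hmap : ∀ k : ℕ, a ^ k = (C ^ k).map Complex.ofReal := by
    intro k
    have := map_pow (Complex.ofRealHom.mapMatrix) C k
    exact this.symm
  have hnormge : ∀ k : ℕ, s ^ k ≤ ‖a ^ k‖ := by
    intro k
    set i0 : Fin n := ⟨0, hn⟩
    calc s ^ k ≤ ∑ j, (C ^ k) i0 j := hpow k i0
      _ = ∑ j, ‖(a ^ k) i0 j‖ := by
          rw [hmap]
          refine Finset.sum_congr rfl fun j _ => ?_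
          simp [Matrix.map_apply, Complex.norm_real, Real.norm_eq_abs,
            abs_of_nonneg (hCk k i0 j)]
      _ ≤ ‖a ^ k‖ := by
          rw [Matrix.linfty_opNorm_def]
          push_cast
          have : (∑ j, ‖(a ^ k) i0 j‖₊ : NNReal) ≤ Finset.univ.sup fun i => ∑ j, ‖(a ^ k) i j‖₊ :=
            Finset.le_sup (f := fun i => ∑ j, ‖(a ^ k) i j‖₊) (Finset.mem_univ i0)
          calc ∑ j, ‖(a ^ k) i0 j‖ = ((∑ j, ‖(a ^ k) i0 j‖₊ : NNReal) : ℝ) := by push_cast; rfl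
            _ ≤ _ := by exact_mod_cast this
  -- Gelfand
  have hgel := spectrum.pow_nnnorm_pow_one_div_tendsto_nhds_spectralRadius a
  have hub : spectralRadius ℂ a ≤ ENNReal.ofReal (specRad C) := by
    rw [spectralRadius]
    refine iSup₂_le fun μ hμ => ?_
    have h1 : (‖μ‖₊ : ENNReal) = ENNReal.ofReal ‖μ‖ := by
      rw [ofReal_norm, enorm_eq_nnnorm]
    rw [h1]
    exact ENNReal.ofReal_le_ofReal (abs_le_specRad hn hμ)
  have hlb : ENNReal.ofReal s ≤ spectralRadius ℂ a := by
    refine ge_of_tendsto hgel ?_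
    filter_upwards [eventually_ge_atTop 1] with k hk
    have h2 : (ENNReal.ofReal s) ^ (k : ℝ) ≤ (‖a ^ k‖₊ : ENNReal) := by
      have h2' : ENNReal.ofReal (s ^ k) ≤ ENNReal.ofReal ‖a ^ k‖ :=
        ENNReal.ofReal_le_ofReal (hnormge k)
      rw [ofReal_norm, enorm_eq_nnnorm] at h2'
      calc (ENNReal.ofReal s) ^ (k : ℝ) = ENNReal.ofReal (s ^ k) := by
            rw [ENNReal.ofReal_rpow_of_nonneg hs (by positivity), Real.rpow_natCast]
        _ ≤ _ := h2'
    have h3 := ENNReal.rpow_le_rpow h2 (by positivity : (0:ℝ) ≤ 1 / (k:ℝ))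
    rw [← ENNReal.rpow_mul] at h3
    have hk0 : (k : ℝ) ≠ 0 := by positivity
    rw [mul_one_div_cancel hk0, ENNReal.rpow_one] at h3
    exact h3
  have := hlb.trans hub
  rwa [ENNReal.ofReal_le_ofReal_iff (specRad_nonneg hn C)] at this

lemma specRad_le_rowsum (hn : 0 < n) {C : Matrix (Fin n) (Fin n) ℝ}
    (hC : ∀ i j, 0 ≤ C i j) {s : ℝ} (h : ∀ i, ∑ j, C i j ≤ s) :
    specRad C ≤ s := by
  have hs0 : 0 ≤ s :=
    le_trans (Finset.sum_nonneg fun j _ => hC ⟨0, hn⟩ j) (h ⟨0, hn⟩)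
  refine Real.sSup_le ?_ hs0
  rintro x ⟨μ, hμ, rfl⟩
  exact eig_abs_le_rowsum hC hμ h
end Spec


lemma specRad_eq_of_conj {n : ℕ} {A C : Matrix (Fin n) (Fin n) ℝ} {d : Fin n → ℝ}
    (hd : ∀ i, d i ≠ 0) (hC : ∀ i j, C i j = A i j * d j / d i) :
    specRad C = specRad A := by
  have hdc : ∀ i, (d i : ℂ) ≠ 0 := fun i => by exact_mod_cast hd i
  have hone : (Matrix.diagonal fun i => (d i : ℂ)) * (Matrix.diagonal fun i => (d i : ℂ)⁻¹) = 1 := by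
    rw [Matrix.diagonal_mul_diagonal, ← Matrix.diagonal_one]
    exact congrArg Matrix.diagonal (funext fun i => mul_inv_cancel₀ (hdc i))
  have hone' : (Matrix.diagonal fun i => (d i : ℂ)⁻¹) * (Matrix.diagonal fun i => (d i : ℂ)) = 1 := by
    rw [Matrix.diagonal_mul_diagonal, ← Matrix.diagonal_one]
    exact congrArg Matrix.diagonal (funext fun i => inv_mul_cancel₀ (hdc i))
  set u : (Matrix (Fin n) (Fin n) ℂ)ˣ :=
    ⟨Matrix.diagonal fun i => (d i : ℂ), Matrix.diagonal fun i => (d i : ℂ)⁻¹, hone, hone'⟩ with hu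
  have hmap : C.map Complex.ofReal
      = (↑(u⁻¹) : Matrix (Fin n) (Fin n) ℂ) * (A.map Complex.ofReal)
        * (↑u : Matrix (Fin n) (Fin n) ℂ) := by
    ext i j
    have : (↑(u⁻¹) : Matrix (Fin n) (Fin n) ℂ) = Matrix.diagonal fun i => (d i : ℂ)⁻¹ := rfl
    rw [this]
    have hcoe : (↑u : Matrix (Fin n) (Fin n) ℂ) = Matrix.diagonal fun i => (d i : ℂ) := rfl
    rw [hcoe, Matrix.mul_diagonal, Matrix.diagonal_mul, Matrix.map_apply, Matrix.map_apply, hC]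
    push_cast
    field_simp
  have hspec : spectrum ℂ (C.map Complex.ofReal) = spectrum ℂ (A.map Complex.ofReal) := by
    rw [hmap, spectrum.units_conjugate']
  unfold specRad
  rw [hspec]

lemma stochastic_contract {n : ℕ} (ne : (Finset.univ : Finset (Fin n)).Nonempty)
    (M : Matrix (Fin n) (Fin n) ℝ) (δ : Fin n → ℝ) (v w : Fin n → ℝ)
    (hδ0 : ∀ j, 0 ≤ δ j) (hMδ : ∀ i j, δ j ≤ M i j)
    (hrow : ∀ i, ∑ j, M i j = 1) (hw : ∀ i, w i = ∑ j, M i j * v j) :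
    Finset.univ.inf' ne v ≤ Finset.univ.inf' ne w ∧
    Finset.univ.sup' ne w ≤ Finset.univ.sup' ne v ∧
    Finset.univ.sup' ne w - Finset.univ.inf' ne w ≤
      (1 - ∑ j, δ j) * (Finset.univ.sup' ne v - Finset.univ.inf' ne v) := by
  have hMnn : ∀ i j, 0 ≤ M i j := fun i j => (hδ0 j).trans (hMδ i j)
  set iv := Finset.univ.inf' ne v with hiv
  set sv := Finset.univ.sup' ne v with hsv
  have hivle : ∀ j, iv ≤ v j := fun j => Finset.inf'_le _ (Finset.mem_univ j)
  have hsvle : ∀ j, v j ≤ sv := fun j => Finset.le_sup' _ (Finset.mem_univ j)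
  have hlo : ∀ i, iv ≤ w i := by
    intro i
    rw [hw]
    calc iv = ∑ j, M i j * iv := by rw [← Finset.sum_mul, hrow, one_mul]
      _ ≤ ∑ j, M i j * v j :=
        Finset.sum_le_sum fun j _ => mul_le_mul_of_nonneg_left (hivle j) (hMnn i j)
  have hhi : ∀ i, w i ≤ sv := by
    intro i
    rw [hw]
    calc ∑ j, M i j * v j ≤ ∑ j, M i j * sv :=
        Finset.sum_le_sum fun j _ => mul_le_mul_of_nonneg_left (hsvle j) (hMnn i j)
      _ = sv := by rw [← Finset.sum_mul, hrow, one_mul]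
  refine ⟨Finset.le_inf' ne _ fun i _ => hlo i, Finset.sup'_le ne _ fun i _ => hhi i, ?_⟩
  obtain ⟨p, -, hp⟩ := Finset.exists_mem_eq_sup' ne w
  obtain ⟨q, -, hq⟩ := Finset.exists_mem_eq_inf' ne w
  rw [hp, hq]
  have key : ∀ i, ∑ j, (M i j - δ j) * v j ≤ (1 - ∑ j, δ j) * sv := by
    intro i
    have h1 : ∑ j, (M i j - δ j) * v j ≤ ∑ j, (M i j - δ j) * sv :=
      Finset.sum_le_sum fun j _ => mul_le_mul_of_nonneg_left (hsvle j)
        (sub_nonneg.mpr (hMδ i j))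
    have h2 : ∑ j, (M i j - δ j) * sv = (1 - ∑ j, δ j) * sv := by
      rw [← Finset.sum_mul, Finset.sum_sub_distrib, hrow]
    exact h1.trans_eq h2
  have key2 : ∀ i, (1 - ∑ j, δ j) * iv ≤ ∑ j, (M i j - δ j) * v j := by
    intro i
    have h1 : ∑ j, (M i j - δ j) * iv ≤ ∑ j, (M i j - δ j) * v j :=
      Finset.sum_le_sum fun j _ => mul_le_mul_of_nonneg_left (hivle j)
        (sub_nonneg.mpr (hMδ i j))
    have h2 : ∑ j, (M i j - δ j) * iv = (1 - ∑ j, δ j) * iv := by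
      rw [← Finset.sum_mul, Finset.sum_sub_distrib, hrow]
    exact h2.symm.trans_le h1
  have hsplit : ∀ i, w i = (∑ j, (M i j - δ j) * v j) + ∑ j, δ j * v j := by
    intro i
    rw [hw, ← Finset.sum_add_distrib]
    congr 1
    funext j
    ring
  have h3 : w p - w q = (∑ j, (M p j - δ j) * v j) - ∑ j, (M q j - δ j) * v j := by
    rw [hsplit p, hsplit q]; ring
  have h4 : (1 - ∑ j, δ j) * sv - (1 - ∑ j, δ j) * iv = (1 - ∑ j, δ j) * (sv - iv) := by
    ring
  linarith [key p, key2 q]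

/-- Convergence of the iterative algorithm: for a primitive matrix with positive row
sums, the sequences `ξ^(t) = ρ(A) − min_i r_i(A^(t))` and
`ζ^(t) = max_i r_i(A^(t)) − ρ(A)` are nonnegative, nonincreasing, and tend to `0`;
every row sum of `A^(t)` tends to the Perron root. -/
theorem row_sum_iteration_converges {n : ℕ} (hn : 0 < n)
    (A : Matrix (Fin n) (Fin n) ℝ) (hA : ∀ i j, 0 ≤ A i j)
    (hprim : ∃ m : ℕ, 0 < m ∧ ∀ i j, 0 < (A ^ m) i j)
    (hrowpos : ∀ i, 0 < ∑ j, A i j)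
    (B : ℕ → Matrix (Fin n) (Fin n) ℝ)
    (r : ℕ → Fin n → ℝ) (hr : ∀ t i, r t i = ∑ j, B t i j)
    (hB0 : B 0 = A)
    (hBt : ∀ t, B (t + 1) = (Matrix.diagonal (r t))⁻¹ * B t * Matrix.diagonal (r t)) :
    let ne : (Finset.univ : Finset (Fin n)).Nonempty := Finset.univ_nonempty_iff.mpr ⟨⟨0, hn⟩⟩
    let ξ : ℕ → ℝ := fun t => specRad A - Finset.univ.inf' ne (r t)
    let ζ : ℕ → ℝ := fun t => Finset.univ.sup' ne (r t) - specRad A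
    (∀ t, 0 ≤ ξ t) ∧ (∀ t, 0 ≤ ζ t) ∧ Antitone ξ ∧ Antitone ζ ∧
    Tendsto ξ atTop (nhds 0) ∧ Tendsto ζ atTop (nhds 0) ∧
    ∀ i, Tendsto (fun t => r t i) atTop (nhds (specRad A)) := by
  intro ne ξ ζ
  obtain ⟨m, hm, hAm⟩ := hprim
  -- nonnegativity of powers of A
  have hApow_nn : ∀ k i j, 0 ≤ (A ^ k) i j := by
    intro k
    induction k with
    | zero => intro i j; by_cases hij : i = j <;> simp [Matrix.one_apply, hij]
    | succ k ih =>
        intro i j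
        rw [pow_succ, Matrix.mul_apply]
        exact Finset.sum_nonneg fun l _ => mul_nonneg (ih i l) (hA l j)
  -- nonnegativity of B t and positivity of r t, jointly by induction
  have main : ∀ t, (∀ i j, 0 ≤ B t i j) ∧ (∀ i, 0 < r t i) := by
    intro t
    induction t with
    | zero =>
        refine ⟨fun i j => by rw [hB0]; exact hA i j, fun i => ?_⟩
        rw [hr, hB0]
        exact hrowpos i
    | succ t ih =>
        obtain ⟨hBnn, hrp⟩ := ih
        have hinv : (Matrix.diagonal (r t))⁻¹ = Matrix.diagonal (fun i => (r t i)⁻¹) := by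
          apply Matrix.inv_eq_left_inv
          rw [Matrix.diagonal_mul_diagonal, ← Matrix.diagonal_one]
          exact congrArg Matrix.diagonal (funext fun i => inv_mul_cancel₀ (hrp i).ne')
        have hsucc : ∀ i j, B (t+1) i j = (r t i)⁻¹ * B t i j * r t j := by
          intro i j
          rw [hBt t, hinv, Matrix.mul_diagonal, Matrix.diagonal_mul]
        have hex : ∀ i, ∃ j, 0 < B t i j := by
          intro i
          by_contra hc
          push_neg at hc
          have h0 : ∑ j, B t i j = 0 :=
            Finset.sum_eq_zero fun j _ => le_antisymm (hc j) (hBnn i j)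
          rw [← hr] at h0
          exact (hrp i).ne' h0
        constructor
        · intro i j
          rw [hsucc]
          exact mul_nonneg (mul_nonneg (inv_nonneg.mpr (hrp i).le) (hBnn i j)) (hrp j).le
        · intro i
          rw [hr]
          obtain ⟨j0, hj0⟩ := hex i
          refine Finset.sum_pos' (fun j _ => ?_) ⟨j0, Finset.mem_univ j0, ?_⟩
          · rw [hsucc]
            exact mul_nonneg (mul_nonneg (inv_nonneg.mpr (hrp i).le) (hBnn i j)) (hrp j).le
          · rw [hsucc]
            exact mul_pos (mul_pos (inv_pos.mpr (hrp i)) hj0) (hrp j0)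
  have hBnn : ∀ t i j, 0 ≤ B t i j := fun t => (main t).1
  have hrpos : ∀ t i, 0 < r t i := fun t => (main t).2
  have hBsucc : ∀ t i j, B (t+1) i j = (r t i)⁻¹ * B t i j * r t j := by
    intro t i j
    have hinv : (Matrix.diagonal (r t))⁻¹ = Matrix.diagonal (fun i => (r t i)⁻¹) := by
      apply Matrix.inv_eq_left_inv
      rw [Matrix.diagonal_mul_diagonal, ← Matrix.diagonal_one]
      exact congrArg Matrix.diagonal (funext fun i => inv_mul_cancel₀ (hrpos t i).ne')
    rw [hBt t, hinv, Matrix.mul_diagonal, Matrix.diagonal_mul]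
  -- cumulative products
  set e : ℕ → Fin n → ℝ := fun t j => ∏ s ∈ Finset.range t, r s j with he
  have hepos : ∀ t j, 0 < e t j := fun t j => Finset.prod_pos fun s _ => hrpos s j
  have hesucc : ∀ t j, e (t+1) j = e t j * r t j := fun t j => Finset.prod_range_succ _ t
  have hBform : ∀ t i j, B t i j = A i j * e t j / e t i := by
    intro t
    induction t with
    | zero =>
        intro i j
        rw [hB0]
        simp [he]
    | succ t ih =>
        intro i j
        rw [hBsucc, ih i j, hesucc, hesucc]
        have h1 := (hrpos t i).ne'
        have h2 := (hepos t i).ne'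
        field_simp
  have hE : ∀ k t i, e (t+k) i = ∑ j, (A ^ k) i j * e t j := by
    intro k
    induction k with
    | zero =>
        intro t i
        simp [Matrix.one_apply]
    | succ k ih =>
        intro t i
        have step1 : e (t + (k+1)) i = e (t+k) i * r (t+k) i := hesucc (t+k) i
        rw [step1, hr]
        calc e (t+k) i * ∑ j, B (t+k) i j = ∑ j, A i j * e (t+k) j := by
              rw [Finset.mul_sum]
              refine Finset.sum_congr rfl fun j _ => ?_
              rw [hBform, ← mul_div_assoc]
              exact mul_div_cancel_left₀ _ (hepos (t+k) i).ne' 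
          _ = ∑ j, A i j * ∑ l, (A ^ k) j l * e t l :=
              Finset.sum_congr rfl fun j _ => by rw [ih]
          _ = ∑ l, (A ^ (k+1)) i l * e t l := by
              rw [pow_succ']
              simp_rw [Matrix.mul_apply, Finset.sum_mul, Finset.mul_sum]
              rw [Finset.sum_comm]
              refine Finset.sum_congr rfl fun l _ => Finset.sum_congr rfl fun j _ => by ring
  have hrEq : ∀ t i, r t i = e (t+1) i / e t i := by
    intro t i
    rw [hesucc]
    exact (mul_div_cancel_left₀ _ (hepos t i).ne').symm
  -- one step monotonicity
  have hstep : ∀ t, Finset.univ.inf' ne (r t) ≤ Finset.univ.inf' ne (r (t+1)) ∧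
      Finset.univ.sup' ne (r (t+1)) ≤ Finset.univ.sup' ne (r t) := by
    intro t
    have h := stochastic_contract ne (Matrix.of fun i j => B t i j / r t i) (fun _ => 0)
      (r t) (r (t+1)) (fun _ => le_refl 0)
      (fun i j => div_nonneg (hBnn t i j) (hrpos t i).le)
      (fun i => by
        show ∑ j, B t i j / r t i = 1
        rw [← Finset.sum_div, ← hr, div_self (hrpos t i).ne'])
      (fun i => by
        show r (t+1) i = ∑ j, (B t i j / r t i) * r t j
        rw [hr]
        refine Finset.sum_congr rfl fun j _ => ?_
        rw [hBsucc]
        ring)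
    exact ⟨h.1, h.2.1⟩
  -- extremal entries of A^m
  set amin : ℝ := Finset.univ.inf' ne (fun i => Finset.univ.inf' ne (fun j => (A^m) i j))
    with hamin
  set amax : ℝ := Finset.univ.sup' ne (fun i => Finset.univ.sup' ne (fun j => (A^m) i j))
    with hamax
  have hamin_le : ∀ i j, amin ≤ (A^m) i j := fun i j =>
    le_trans
      (Finset.inf'_le (fun i => Finset.univ.inf' ne fun j => (A^m) i j) (Finset.mem_univ i))
      (Finset.inf'_le (fun j => (A^m) i j) (Finset.mem_univ j))
  have hle_amax : ∀ i j, (A^m) i j ≤ amax := fun i j =>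
    le_trans (Finset.le_sup' (fun j => (A^m) i j) (Finset.mem_univ j))
      (Finset.le_sup' (fun i => Finset.univ.sup' ne fun j => (A^m) i j) (Finset.mem_univ i))
  have haminpos : 0 < amin := by
    rw [hamin, Finset.lt_inf'_iff]
    intro i _
    rw [Finset.lt_inf'_iff]
    intro j _
    exact hAm i j
  have hamaxpos : 0 < amax := haminpos.trans_le (le_trans (hamin_le ⟨0,hn⟩ ⟨0,hn⟩) (hle_amax _ _))
  set σ : ℝ := amin / amax with hσdef
  have hσpos : 0 < σ := div_pos haminpos hamaxpos
  have hσle1 : σ ≤ 1 := by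
    rw [hσdef, div_le_one hamaxpos]
    exact le_trans (hamin_le ⟨0,hn⟩ ⟨0,hn⟩) (hle_amax _ _)
  -- m-step contraction
  have hcontr : ∀ t, Finset.univ.sup' ne (r (t+m)) - Finset.univ.inf' ne (r (t+m)) ≤
      (1 - σ) * (Finset.univ.sup' ne (r t) - Finset.univ.inf' ne (r t)) := by
    intro t
    set S : ℝ := ∑ k, e t k with hS
    have hSpos : 0 < S := Finset.sum_pos (fun k _ => hepos t k) ne
    have hδsum : ∑ j, (amin * e t j / (amax * S)) = σ := by
      rw [← Finset.sum_div, ← Finset.mul_sum, ← hS, hσdef,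
        mul_comm amin S, mul_comm amax S, mul_div_mul_left _ _ hSpos.ne']
    have h := stochastic_contract ne
      (Matrix.of fun i j => (A^m) i j * e t j / e (t+m) i)
      (fun j => amin * e t j / (amax * S)) (r t) (r (t+m))
      (fun j => div_nonneg (mul_nonneg haminpos.le (hepos t j).le)
        (mul_nonneg hamaxpos.le hSpos.le))
      (fun i j => by
        show amin * e t j / (amax * S) ≤ (A^m) i j * e t j / e (t+m) i
        have hub : e (t+m) i ≤ amax * S := by
          rw [hE m t i, hS, Finset.mul_sum]
          exact Finset.sum_le_sum fun j _ =>
            mul_le_mul_of_nonneg_right (hle_amax i j) (hepos t j).le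
        exact div_le_div₀ (mul_nonneg (hApow_nn m i j) (hepos t j).le)
          (mul_le_mul_of_nonneg_right (hamin_le i j) (hepos t j).le)
          (hepos (t+m) i) hub)
      (fun i => by
        show ∑ j, (A^m) i j * e t j / e (t+m) i = 1
        rw [← Finset.sum_div, ← hE, div_self (hepos (t+m) i).ne'])
      (fun i => by
        show r (t+m) i = ∑ j, ((A^m) i j * e t j / e (t+m) i) * r t j
        rw [hrEq (t+m) i, show t+m+1 = (t+1)+m by omega, hE m (t+1) i, Finset.sum_div]
        refine Finset.sum_congr rfl fun j _ => ?_
        rw [hesucc]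
        ring)
    rw [hδsum] at h
    exact h.2.2
  -- gap sequence
  set gap : ℕ → ℝ := fun t =>
    Finset.univ.sup' ne (r t) - Finset.univ.inf' ne (r t) with hgap
  have hgapnn : ∀ t, 0 ≤ gap t := by
    intro t
    have := (Finset.inf'_le (r t) (Finset.mem_univ ⟨0,hn⟩)).trans
      (Finset.le_sup' (r t) (Finset.mem_univ ⟨0,hn⟩))
    simpa only [hgap, sub_nonneg] using this
  have hmono_mn : Monotone (fun t => Finset.univ.inf' ne (r t)) :=
    monotone_nat_of_le_succ fun t => (hstep t).1
  have hanti_mx : Antitone (fun t => Finset.univ.sup' ne (r t)) :=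
    antitone_nat_of_succ_le fun t => (hstep t).2
  have hgapanti : Antitone gap := fun s t hst => sub_le_sub (hanti_mx hst) (hmono_mn hst)
  have hgeo : ∀ k, gap (k * m) ≤ (1 - σ)^k * gap 0 := by
    intro k
    induction k with
    | zero => simp [hgap]
    | succ k ih =>
        have h1 : gap ((k+1) * m) ≤ (1 - σ) * gap (k * m) := by
          have := hcontr (k * m)
          rw [show (k+1) * m = k * m + m by ring]
          exact this
        calc gap ((k+1) * m) ≤ (1 - σ) * gap (k * m) := h1
          _ ≤ (1 - σ) * ((1 - σ)^k * gap 0) :=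
              mul_le_mul_of_nonneg_left ih (by linarith)
          _ = (1 - σ)^(k+1) * gap 0 := by ring
  have hgapbound : ∀ t, gap t ≤ (1 - σ)^(t / m) * gap 0 := by
    intro t
    exact (hgapanti (Nat.div_mul_le_self t m)).trans (hgeo (t / m))
  have hdivtop : Tendsto (fun t : ℕ => t / m) atTop atTop :=
    (Filter.map_div_atTop_eq_nat m hm).le
  have hpowzero : Tendsto (fun k : ℕ => (1 - σ)^k) atTop (nhds 0) :=
    tendsto_pow_atTop_nhds_zero_of_lt_one (by linarith) (by linarith)
  have hright : Tendsto (fun t : ℕ => (1 - σ)^(t / m) * gap 0) atTop (nhds 0) := by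
    simpa using (hpowzero.comp hdivtop).mul_const (gap 0)
  have hgap0 : Tendsto gap atTop (nhds 0) :=
    tendsto_of_tendsto_of_tendsto_of_le_of_le tendsto_const_nhds hright hgapnn hgapbound
  -- spectral radius bounds
  have hρub : ∀ t, specRad A ≤ Finset.univ.sup' ne (r t) := by
    intro t
    have hconj : specRad (B t) = specRad A :=
      specRad_eq_of_conj (fun i => (hepos t i).ne') (hBform t)
    rw [← hconj]
    exact specRad_le_rowsum hn (hBnn t) fun i => by
      rw [← hr]; exact Finset.le_sup' (r t) (Finset.mem_univ i)
  have hρlb : ∀ t, Finset.univ.inf' ne (r t) ≤ specRad A := by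
    intro t
    have hconj : specRad (B t) = specRad A :=
      specRad_eq_of_conj (fun i => (hepos t i).ne') (hBform t)
    rw [← hconj]
    refine rowsum_le_specRad hn (hBnn t)
      (le_of_lt ((Finset.lt_inf'_iff ne).mpr fun i _ => hrpos t i)) fun i => by
      rw [← hr]; exact Finset.inf'_le (r t) (Finset.mem_univ i)
  -- assemble
  have hξnn : ∀ t, 0 ≤ ξ t := fun t => sub_nonneg.mpr (hρlb t)
  have hζnn : ∀ t, 0 ≤ ζ t := fun t => sub_nonneg.mpr (hρub t)
  have hξgap : ∀ t, ξ t ≤ gap t := fun t => sub_le_sub (hρub t) (le_refl _)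
  have hζgap : ∀ t, ζ t ≤ gap t := fun t => sub_le_sub (le_refl _) (hρlb t)
  refine ⟨hξnn, hζnn,
    antitone_nat_of_succ_le fun t => sub_le_sub_left (hstep t).1 _,
    antitone_nat_of_succ_le fun t => sub_le_sub_right (hstep t).2 _,
    tendsto_of_tendsto_of_tendsto_of_le_of_le tendsto_const_nhds hgap0 hξnn hξgap,
    tendsto_of_tendsto_of_tendsto_of_le_of_le tendsto_const_nhds hgap0 hζnn hζgap,
    fun i => ?_⟩
  have hlo : ∀ t, specRad A - gap t ≤ r t i := by
    intro t
    have h1 := Finset.inf'_le (r t) (Finset.mem_univ i)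
    have h2 := hρub t
    simp only [hgap]
    linarith
  have hhi : ∀ t, r t i ≤ specRad A + gap t := by
    intro t
    have h1 := Finset.le_sup' (r t) (Finset.mem_univ i)
    have h2 := hρlb t
    simp only [hgap]
    linarith
  have hl : Tendsto (fun t => specRad A - gap t) atTop (nhds (specRad A)) := by
    simpa using tendsto_const_nhds.sub hgap0
  have hh : Tendsto (fun t => specRad A + gap t) atTop (nhds (specRad A)) := by
    simpa using tendsto_const_nhds.add hgap0
  exact tendsto_of_tendsto_of_tendsto_of_le_of_le hl hh hlo hhi
end
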